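/- If x1 and x2 are symmetric probability measures on the extended reals, then x1 ⊛ x2 is again a symmetric probability measure on the extended reals. -/

import Mathlib

open MeasureTheory Real Filter Topology Polynomial

noncomputable section

/-- The space of finite signed Borel measures on the extended reals `ℝ̄`. -/
abbrev SM := MeasureTheory.SignedMeasure EReal

namespace SCLDPC

/-- The weight `e^{-α/2}` as an extended nonnegative real (`+∞` at `α = -∞`). -/
def wt (α : EReal) : ENNReal :=
  if α = ⊥ then ⊤ else if α = ⊤ then 0 else ENNReal.ofReal (Real.exp (-(α.toReal) / 2))

/-- A (nonnegative) Borel measure `μ` on `ℝ̄` is symmetric if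
`∫_{-E} e^{-α/2} μ(dα) = ∫_{E} e^{-α/2} μ(dα)` for every Borel set `E`
(stated with extended nonnegative integrals, which is equivalent to requiring
equality whenever one of the two sides is finite). -/
def IsSymmMeasure (μ : Measure EReal) : Prop :=
  ∀ E : Set EReal, MeasurableSet E →
    ∫⁻ α in (fun a : EReal => -a) ⁻¹' E, wt α ∂μ = ∫⁻ α in E, wt α ∂μ

/-- Positive part of the Jordan decomposition. -/
def jp (x : SM) : Measure EReal := x.toJordanDecomposition.posPart

/-- Negative part of the Jordan decomposition. -/
def jn (x : SM) : Measure EReal := x.toJordanDecomposition.negPart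

instance (x : SM) : IsFiniteMeasure (jp x) := x.toJordanDecomposition.posPart_finite

instance (x : SM) : IsFiniteMeasure (jn x) := x.toJordanDecomposition.negPart_finite

/-- A finite signed Borel measure on `ℝ̄` is symmetric iff both parts of its Jordan
decomposition are symmetric measures. -/
def IsSymm (x : SM) : Prop := IsSymmMeasure (jp x) ∧ IsSymmMeasure (jn x)

/-- Membership in `X`, the set of symmetric probability measures on `ℝ̄`. -/
def MemX (x : SM) : Prop :=
  (∃ (μ : Measure EReal) (hμ : IsProbabilityMeasure μ),
      x = (letI := hμ; μ.toSignedMeasure)) ∧ IsSymm x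

/-- Membership in `X_d`, the set of differences of symmetric probability measures. -/
def MemXd (y : SM) : Prop := ∃ x1 x2 : SM, MemX x1 ∧ MemX x2 ∧ y = x1 - x2

/-- Integral of a real function against a finite signed measure. -/
def sInt (f : EReal → ℝ) (x : SM) : ℝ := (∫ α, f α ∂(jp x)) - ∫ α, f α ∂(jn x)

/-- `tanh(α/2)` extended continuously to `ℝ̄`. -/
def tanhHalf (α : EReal) : ℝ :=
  if α = ⊤ then 1 else if α = ⊥ then -1 else Real.tanh (α.toReal / 2)

/-- The inverse hyperbolic tangent on `(-1, 1)`. -/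
def artanh (t : ℝ) : ℝ := Real.log ((1 + t) / (1 - t)) / 2

/-- `2 tanh⁻¹(t)` valued in `ℝ̄` (sending `t ≥ 1` to `+∞` and `t ≤ -1` to `-∞`). -/
def atanhTwo (t : ℝ) : EReal :=
  if 1 ≤ t then ⊤ else if t ≤ -1 then ⊥ else ((2 * artanh t : ℝ) : EReal)

/-- Variable-node convolution `⊛` of two (nonnegative) measures:
`(μ ⊛ ν)(E) = ∫ μ(E - α) ν(dα)`, i.e. the pushforward of `μ × ν` under addition. -/
def mConv (μ ν : Measure EReal) : Measure EReal :=
  (μ.prod ν).map fun p => p.1 + p.2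

/-- Check-node convolution `⊠` of two (nonnegative) measures:
`(μ ⊠ ν)(E) = ∫ μ(2 tanh⁻¹(tanh(E/2) / tanh(α/2))) ν(dα)`, where the argument of `μ`
is the image of `E` under `β ↦ 2 tanh⁻¹(tanh(β/2) / tanh(α/2))`; equivalently, the
pushforward of `μ × ν` under `(β, α) ↦ 2 tanh⁻¹(tanh(β/2) · tanh(α/2))`. -/
def mCheck (μ ν : Measure EReal) : Measure EReal :=
  (μ.prod ν).map fun p => atanhTwo (tanhHalf p.1 * tanhHalf p.2)

instance (μ ν : Measure EReal) [IsFiniteMeasure μ] [IsFiniteMeasure ν] :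
    IsFiniteMeasure (mConv μ ν) := by unfold mConv; infer_instance

instance (μ ν : Measure EReal) [IsFiniteMeasure μ] [IsFiniteMeasure ν] :
    IsFiniteMeasure (mCheck μ ν) := by unfold mCheck; infer_instance

/-- The variable-node operation `⊛` extended bilinearly to finite signed measures. -/
def sConv (x y : SM) : SM :=
  (mConv (jp x) (jp y)).toSignedMeasure - (mConv (jp x) (jn y)).toSignedMeasure
    - (mConv (jn x) (jp y)).toSignedMeasure + (mConv (jn x) (jn y)).toSignedMeasure

/-- The check-node operation `⊠` extended bilinearly to finite signed measures. -/
def sCheck (x y : SM) : SM :=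
  (mCheck (jp x) (jp y)).toSignedMeasure - (mCheck (jp x) (jn y)).toSignedMeasure
    - (mCheck (jn x) (jp y)).toSignedMeasure + (mCheck (jn x) (jn y)).toSignedMeasure

section Aux

open Set

lemma measurable_wt : Measurable wt := by
  unfold wt
  refine Measurable.ite (by simp [Set.setOf_eq_eq_singleton, measurableSet_singleton])
    measurable_const ?_
  refine Measurable.ite (by simp [Set.setOf_eq_eq_singleton, measurableSet_singleton])
    measurable_const ?_
  exact (measurable_ereal_toReal.neg.div_const 2).exp.ennreal_ofReal

lemma measurable_add2 : Measurable fun p : EReal × EReal => p.1 + p.2 := by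
  have h : (fun p : EReal × EReal => p.1 + p.2)
      = fun p => if p.1 = ⊥ ∨ p.2 = ⊥ then ⊥ else if p.1 = ⊤ ∨ p.2 = ⊤ then ⊤
          else ((p.1.toReal + p.2.toReal : ℝ) : EReal) := by
    funext p
    rcases p with ⟨a, b⟩
    induction a using EReal.rec <;> induction b using EReal.rec <;>
      simp [EReal.bot_add, EReal.add_bot, EReal.top_add_of_ne_bot, EReal.add_top_of_ne_bot,
        ← EReal.coe_add]
  rw [h]
  have h1 : MeasurableSet {p : EReal × EReal | p.1 = ⊥ ∨ p.2 = ⊥} := by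
    have he : {p : EReal × EReal | p.1 = ⊥ ∨ p.2 = ⊥}
        = Prod.fst ⁻¹' {⊥} ∪ Prod.snd ⁻¹' {⊥} := by ext p; simp
    rw [he]
    exact (measurable_fst (measurableSet_singleton _)).union
      (measurable_snd (measurableSet_singleton _))
  have h2 : MeasurableSet {p : EReal × EReal | p.1 = ⊤ ∨ p.2 = ⊤} := by
    have he : {p : EReal × EReal | p.1 = ⊤ ∨ p.2 = ⊤}
        = Prod.fst ⁻¹' {⊤} ∪ Prod.snd ⁻¹' {⊤} := by ext p; simp
    rw [he]
    exact (measurable_fst (measurableSet_singleton _)).union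
      (measurable_snd (measurableSet_singleton _))
  exact Measurable.ite h1 measurable_const <| Measurable.ite h2 measurable_const <|
    ((measurable_ereal_toReal.comp measurable_fst).add
      (measurable_ereal_toReal.comp measurable_snd)).coe_real_ereal

lemma measurable_negE : Measurable (fun a : EReal => -a) := continuous_neg.measurable

lemma wt_add {a b : EReal} (ha : a ≠ ⊥) (hb : b ≠ ⊥) : wt (a + b) = wt a * wt b := by
  induction a using EReal.rec with
  | bot => exact absurd rfl ha
  | top => simp [EReal.top_add_of_ne_bot hb, wt]
  | coe x =>
    induction b using EReal.rec with
    | bot => exact absurd rfl hb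
    | top => simp [EReal.add_top_of_ne_bot ha, wt]
    | coe y =>
      rw [← EReal.coe_add]
      simp only [wt, EReal.coe_ne_bot, EReal.coe_ne_top, if_false, EReal.toReal_coe]
      rw [← ENNReal.ofReal_mul (Real.exp_nonneg _), ← Real.exp_add]
      ring_nf

lemma jordan_toSM {α : Type*} [MeasurableSpace α] (μ : Measure α) [IsFiniteMeasure μ] :
    μ.toSignedMeasure.toJordanDecomposition
      = ⟨μ, 0, Measure.MutuallySingular.zero_right⟩ := by
  set j : JordanDecomposition α := ⟨μ, 0, Measure.MutuallySingular.zero_right⟩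
  have hj : j.toSignedMeasure = μ.toSignedMeasure := by
    show μ.toSignedMeasure - (0 : Measure α).toSignedMeasure = μ.toSignedMeasure
    rw [Measure.toSignedMeasure_zero, sub_zero]
  rw [← hj, JordanDecomposition.toJordanDecomposition_toSignedMeasure]

lemma jp_toSM (μ : Measure EReal) [IsFiniteMeasure μ] : jp μ.toSignedMeasure = μ := by
  show μ.toSignedMeasure.toJordanDecomposition.posPart = μ
  rw [jordan_toSM]

lemma jn_toSM (μ : Measure EReal) [IsFiniteMeasure μ] : jn μ.toSignedMeasure = 0 := by
  show μ.toSignedMeasure.toJordanDecomposition.negPart = 0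
  rw [jordan_toSM]

lemma withDensity_map_comm {α β : Type*} [MeasurableSpace α] [MeasurableSpace β]
    {f : α → β} (hf : Measurable f) {g : β → ENNReal} (hg : Measurable g) (ρ : Measure α) :
    (ρ.map f).withDensity g = (ρ.withDensity (g ∘ f)).map f := by
  ext E hE
  rw [withDensity_apply _ hE, Measure.map_apply hf hE, withDensity_apply _ (hf hE),
    setLIntegral_map hE hg hf]
  rfl

lemma prod_withDensity {α β : Type*} [MeasurableSpace α] [MeasurableSpace β]
    (μ : Measure α) (ν : Measure β) [SFinite μ] [SFinite ν]
    {f : α → ENNReal} {g : β → ENNReal} (hf : Measurable f) (hg : Measurable g) :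
    (μ.withDensity f).prod (ν.withDensity g)
      = (μ.prod ν).withDensity fun p => f p.1 * g p.2 := by
  ext s hs
  have hFm : Measurable fun p : α × β => s.indicator (fun q => f q.1 * g q.2) p :=
    ((hf.comp measurable_fst).mul (hg.comp measurable_snd)).indicator hs
  rw [Measure.prod_apply hs, withDensity_apply _ hs, ← lintegral_indicator hs,
    lintegral_prod _ hFm.aemeasurable]
  rw [lintegral_withDensity_eq_lintegral_mul μ hf (measurable_measure_prodMk_left hs)]
  congr 1
  funext x
  have hslice : MeasurableSet (Prod.mk x ⁻¹' s) := measurable_prodMk_left hs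
  have hind : ∀ y, s.indicator (fun q : α × β => f q.1 * g q.2) (x, y)
      = f x * (Prod.mk x ⁻¹' s).indicator g y := by
    intro y
    by_cases h : (x, y) ∈ s <;> simp [Set.indicator, h]
  simp only [hind]
  rw [lintegral_const_mul _ (hg.indicator hslice), lintegral_indicator hslice,
    ← withDensity_apply _ hslice]
  rfl

lemma isSymmMeasure_iff_map (μ : Measure EReal) :
    IsSymmMeasure μ ↔ (μ.withDensity wt).map (fun a : EReal => -a) = μ.withDensity wt := by
  constructor
  · intro h
    ext E hE
    rw [Measure.map_apply measurable_negE hE, withDensity_apply _ (measurable_negE hE),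
      withDensity_apply _ hE]
    exact h E hE
  · intro h E hE
    rw [← withDensity_apply _ hE, ← h, Measure.map_apply measurable_negE hE,
      withDensity_apply _ (measurable_negE hE)]

lemma bot_null {μ : Measure EReal} (h : IsSymmMeasure μ) : μ {⊥} = 0 := by
  have h0 := h {⊤} (measurableSet_singleton _)
  have hpre : (fun a : EReal => -a) ⁻¹' {⊤} = {⊥} := by
    ext a; simp [EReal.neg_eq_top_iff]
  rw [hpre, lintegral_singleton, lintegral_singleton] at h0
  have hwb : wt ⊥ = ⊤ := by simp [wt]
  have hwt : wt ⊤ = 0 := by simp [wt]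
  rw [hwb, hwt, zero_mul] at h0
  rcases mul_eq_zero.1 h0 with h' | h'
  · exact absurd h' ENNReal.top_ne_zero
  · exact h'

lemma wd_bot_null {μ : Measure EReal} (hb : μ {⊥} = 0) : (μ.withDensity wt) {⊥} = 0 := by
  rw [withDensity_apply _ (measurableSet_singleton _), lintegral_singleton, hb, mul_zero]

lemma wd_top_null (μ : Measure EReal) : (μ.withDensity wt) {⊤} = 0 := by
  rw [withDensity_apply _ (measurableSet_singleton _), lintegral_singleton]
  simp [wt]

lemma isSymmMeasure_zero : IsSymmMeasure (0 : Measure EReal) := by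
  intro E hE
  simp

lemma isSymmMeasure_mConv (μ1 μ2 : Measure EReal)
    [IsProbabilityMeasure μ1] [IsProbabilityMeasure μ2]
    (h1 : IsSymmMeasure μ1) (h2 : IsSymmMeasure μ2) : IsSymmMeasure (mConv μ1 μ2) := by
  have hb1 : μ1 {⊥} = 0 := bot_null h1
  have hb2 : μ2 {⊥} = 0 := bot_null h2
  rw [isSymmMeasure_iff_map] at h1 h2 ⊢
  have key : (mConv μ1 μ2).withDensity wt
      = ((μ1.withDensity wt).prod (μ2.withDensity wt)).map
          (fun p : EReal × EReal => p.1 + p.2) := by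
    rw [mConv, withDensity_map_comm measurable_add2 measurable_wt,
      prod_withDensity _ _ measurable_wt measurable_wt]
    congr 1
    apply withDensity_congr_ae
    have hnull : (μ1.prod μ2) (Prod.fst ⁻¹' {⊥} ∪ Prod.snd ⁻¹' {⊥}) = 0 := by
      apply measure_union_null
      · rw [← Set.prod_univ, Measure.prod_prod, hb1, zero_mul]
      · rw [← Set.univ_prod, Measure.prod_prod, hb2, mul_zero]
    refine ae_iff.2 (measure_mono_null (fun p hp => ?_) hnull)
    simp only [Set.mem_setOf_eq] at hp
    by_contra hc
    simp only [Set.mem_union, Set.mem_preimage, Set.mem_singleton_iff, not_or] at hc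
    exact hp (wt_add hc.1 hc.2)
  rw [key, Measure.map_map measurable_negE measurable_add2]
  have hbot1 : (μ1.withDensity wt) {⊥} = 0 := wd_bot_null hb1
  have htop1 : (μ1.withDensity wt) {⊤} = 0 := wd_top_null μ1
  have hcongr : ((μ1.withDensity wt).prod (μ2.withDensity wt)).map
        ((fun a : EReal => -a) ∘ fun p : EReal × EReal => p.1 + p.2)
      = ((μ1.withDensity wt).prod (μ2.withDensity wt)).map
        ((fun p : EReal × EReal => p.1 + p.2)
          ∘ Prod.map (fun a : EReal => -a) (fun a : EReal => -a)) := by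
    apply Measure.map_congr
    have hnull : ((μ1.withDensity wt).prod (μ2.withDensity wt))
        (Prod.fst ⁻¹' ({⊥, ⊤} : Set EReal)) = 0 := by
      have h12 : (μ1.withDensity wt) {⊥, ⊤} = 0 := by
        rw [Set.insert_eq]
        exact measure_union_null hbot1 htop1
      rw [← Set.prod_univ, Measure.prod_prod, h12, zero_mul]
    refine ae_iff.2 (measure_mono_null (fun p hp => ?_) hnull)
    simp only [Set.mem_setOf_eq] at hp
    by_contra hc
    simp only [Set.mem_preimage, Set.mem_insert_iff, Set.mem_singleton_iff, not_or] at hc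
    apply hp
    show -(p.1 + p.2) = -p.1 + -p.2
    rw [EReal.neg_add (Or.inl hc.1) (Or.inl hc.2), sub_eq_add_neg]
  rw [hcongr, ← Measure.map_map measurable_add2 (measurable_negE.prodMap measurable_negE),
    ← Measure.map_prod_map _ _ measurable_negE measurable_negE, h1, h2]

end Aux

/-- If `x1` and `x2` are symmetric probability measures on the
extended reals, then `x1 ⊛ x2` is again a symmetric probability measure. -/
theorem conv_mem_X (x1 x2 : SM) (h1 : MemX x1) (h2 : MemX x2) :
    MemX (sConv x1 x2) := by
  obtain ⟨⟨μ1, hp1, hx1⟩, hsym1⟩ := h1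
  obtain ⟨⟨μ2, hp2, hx2⟩, hsym2⟩ := h2
  haveI := hp1; haveI := hp2
  have hjp1 : jp x1 = μ1 := by rw [hx1]; exact jp_toSM μ1
  have hjn1 : jn x1 = 0 := by rw [hx1]; exact jn_toSM μ1
  have hjp2 : jp x2 = μ2 := by rw [hx2]; exact jp_toSM μ2
  have hjn2 : jn x2 = 0 := by rw [hx2]; exact jn_toSM μ2
  have hs1 : IsSymmMeasure μ1 := hjp1 ▸ hsym1.1
  have hs2 : IsSymmMeasure μ2 := hjp2 ▸ hsym2.1
  haveI hprob : IsProbabilityMeasure (mConv μ1 μ2) := by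
    unfold mConv
    exact Measure.isProbabilityMeasure_map measurable_add2.aemeasurable
  have z1 : mConv μ1 (0 : Measure EReal) = 0 := by
    unfold mConv; rw [Measure.prod_zero, Measure.map_zero]
  have z2 : mConv (0 : Measure EReal) μ2 = 0 := by
    unfold mConv; rw [Measure.zero_prod, Measure.map_zero]
  have z3 : mConv (0 : Measure EReal) (0 : Measure EReal) = 0 := by
    unfold mConv; rw [Measure.prod_zero, Measure.map_zero]
  have congrSM : ∀ (μ ν : Measure EReal) [IsFiniteMeasure μ] [IsFiniteMeasure ν],
      μ = ν → μ.toSignedMeasure = ν.toSignedMeasure := by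
    intro μ ν _ _ h
    subst h
    rfl
  have e1 : (mConv (jp x1) (jp x2)).toSignedMeasure = (mConv μ1 μ2).toSignedMeasure :=
    congrSM _ _ (by rw [hjp1, hjp2])
  have e2 : (mConv (jp x1) (jn x2)).toSignedMeasure = (0 : Measure EReal).toSignedMeasure :=
    congrSM _ _ (by rw [hjp1, hjn2, z1])
  have e3 : (mConv (jn x1) (jp x2)).toSignedMeasure = (0 : Measure EReal).toSignedMeasure :=
    congrSM _ _ (by rw [hjn1, hjp2, z2])
  have e4 : (mConv (jn x1) (jn x2)).toSignedMeasure = (0 : Measure EReal).toSignedMeasure :=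
    congrSM _ _ (by rw [hjn1, hjn2, z3])
  have hconv : sConv x1 x2 = (mConv μ1 μ2).toSignedMeasure := by
    unfold sConv
    rw [e1, e2, e3, e4, Measure.toSignedMeasure_zero, sub_zero, sub_zero, add_zero]
  refine ⟨⟨mConv μ1 μ2, hprob, hconv⟩, ?_⟩
  constructor
  · rw [hconv, jp_toSM]
    exact isSymmMeasure_mConv μ1 μ2 hs1 hs2
  · rw [hconv, jn_toSM]
    exact isSymmMeasure_zero

end SCLDPC
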